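/- Assume (S1)–(S2). Fix integers t ≤ u with u − t + 1 ≥ h, potentials g_t,…,g_u satisfying (S2), and a point x* ∈ X. Define N : X → [0,∞) by N(x) = g_t(x) · ∫ [Π_{j=t+1}^{u} g_j(z_j)] · m(x, z_{t+1}) · [Π_{j=t+1}^{u−1} m(z_j, z_{j+1})] · m(z_u, x*) ν_0^{⊗(u−t)}(dz_{t+1}⋯dz_u). Then for every probability measure μ on X: sup_{x∈X} N(x) ≤ δ·(σ+/σ−)·∫ N(x) μ(dx). -/

import Mathlib

open MeasureTheory Finset

/-- Extension of `z : X^{h-1}` (interpreted as states at times `1, …, h-1`) by the boundary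
states `x1` at time `0` and `xh1` at times `≥ h`. -/
noncomputable def ext1 {X : Type*} (x1 xh1 : X) {N : ℕ} (z : Fin N → X) (t : ℕ) : X :=
  if ht : 1 ≤ t ∧ t ≤ N then z ⟨t - 1, by omega⟩ else if t = 0 then x1 else xh1

/-- The `h`-step minorisation of assumption (S1):
`∫ ∏_{j=1}^{h} m(x_j, x_{j+1}) ν₀(dx_2) ⋯ ν₀(dx_h) ≥ σ₋` for all `x_1, x_{h+1}`. -/
def S1minor {X : Type*} [MeasurableSpace X] (ν0 : Measure X) (mker : X → X → ℝ)
    (h : ℕ) (σm : ℝ) : Prop :=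
  ∀ x1 xh1 : X, σm ≤
    ∫ z : Fin (h - 1) → X,
      ∏ j ∈ Finset.range h, mker (ext1 x1 xh1 z j) (ext1 x1 xh1 z (j + 1))
      ∂(Measure.pi fun _ => ν0)

/-- Extension of `z : X^{u-s+1}` (interpreted as states at times `s, …, u`) by the boundary
states `xm` at times `< s` and `xp` at times `> u`. -/
noncomputable def extBlock {X : Type*} (s u : ℕ) (xm xp : X) (z : Fin (u - s + 1) → X)
    (t : ℕ) : X :=
  if ht : s ≤ t ∧ t ≤ u then z ⟨t - s, by omega⟩ else if t < s then xm else xp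

/-- `N(x) = g_t(x) · ∫ [Π_{j=t+1}^{u} g_j(z_j)] · m(x, z_{t+1}) · [Π_{j=t+1}^{u-1}
m(z_j, z_{j+1})] · m(z_u, x*) ν₀^{⊗(u-t)}(dz)`: the unnormalized conditional density of the
observations of the block `{t, …, u}` and of the fixed right boundary state `x*`, given the
state `x` at time `t`. -/
noncomputable def Nfun {X : Type*} [MeasurableSpace X] (ν0 : Measure X)
    (mker : X → X → ℝ) (g : ℕ → X → ℝ) (t u : ℕ) (xstar : X) (x : X) : ℝ :=
  g t x *
    ∫ z : Fin (u - (t + 1) + 1) → X,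
      (∏ j ∈ Finset.Icc (t + 1) (u + 1),
        mker (extBlock (t + 1) u x xstar z (j - 1)) (extBlock (t + 1) u x xstar z j)) *
        ∏ j ∈ Finset.Icc (t + 1) u, g j (extBlock (t + 1) u x xstar z j)
      ∂(Measure.pi fun _ => ν0)

section AuxStmt17

variable {X : Type*} [MeasurableSpace X]

/-- The backward recursion: `Afun n j x e` is the `n`-step weighted transition value
from `x` to endpoint `e`, with potentials `g (j+1), …, g (j+n)` at the intermediate states. -/
noncomputable def Afun (ν0 : Measure X) (mker : X → X → ℝ) (g : ℕ → X → ℝ) :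
    ℕ → ℕ → X → X → ℝ
  | 0, _, x, e => mker x e
  | n+1, j, x, e => ∫ z, mker x z * (g (j+1) z * Afun ν0 mker g n (j+1) z e) ∂ν0

lemma aux_integrable {α : Type*} [MeasurableSpace α] {μ : Measure α} [IsFiniteMeasure μ]
    {f : α → ℝ} (hf : Measurable f) {C : ℝ} (h0 : ∀ a, 0 ≤ f a) (hC : ∀ a, f a ≤ C) :
    Integrable f μ :=
  (integrable_const C).mono' hf.aestronglyMeasurable
    (ae_of_all _ fun a => by rw [Real.norm_eq_abs, abs_of_nonneg (h0 a)]; exact hC a)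

lemma measurable_ext1 (a b : X) {N : ℕ} (j : ℕ) :
    Measurable fun z : Fin N → X => ext1 a b z j := by
  by_cases h1 : 1 ≤ j ∧ j ≤ N
  · simpa only [ext1, dif_pos h1] using measurable_pi_apply _
  · simp only [ext1, dif_neg h1]
    exact measurable_const

lemma ext1_zero (a b : X) {N : ℕ} (z : Fin N → X) : ext1 a b z 0 = a := by
  have h1 : ¬ (1 ≤ 0 ∧ 0 ≤ N) := by omega
  simp [ext1, h1]

lemma ext1_big (a b : X) {N : ℕ} (z : Fin N → X) {j : ℕ} (hj : N < j) : ext1 a b z j = b := by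
  have h1 : ¬ (1 ≤ j ∧ j ≤ N) := by omega
  have h2 : j ≠ 0 := by omega
  simp [ext1, h1, h2]

lemma ext1_mid (a b : X) {N : ℕ} (z : Fin N → X) {j : ℕ} (h1 : 1 ≤ j) (h2 : j ≤ N) :
    ext1 a b z j = z ⟨j - 1, by omega⟩ := by
  simp only [ext1]
  rw [dif_pos ⟨h1, h2⟩]

lemma ext1_cons_succ (a b x0 : X) {n : ℕ} (z : Fin n → X) (j : ℕ) :
    ext1 a b (Fin.cons x0 z : Fin (n+1) → X) (j+1) = ext1 x0 b z j := by
  rcases Nat.eq_zero_or_pos j with rfl | hj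
  · rw [ext1_mid a b _ le_rfl (by omega), ext1_zero]
    have : (⟨0 + 1 - 1, by omega⟩ : Fin (n+1)) = 0 := rfl
    rw [this, Fin.cons_zero]
  · by_cases h2 : j ≤ n
    · rw [ext1_mid a b _ (by omega) (by omega), ext1_mid x0 b z hj h2]
      have hidx : (⟨j + 1 - 1, by omega⟩ : Fin (n+1)) = Fin.succ ⟨j - 1, by omega⟩ := by
        apply Fin.ext
        simp
        omega
      rw [hidx, Fin.cons_succ]
    · rw [ext1_big a b _ (by omega), ext1_big x0 b z (by omega)]

lemma measurable_extBlock (s u : ℕ) (xm xp : X) (j : ℕ) :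
    Measurable fun z : Fin (u - s + 1) → X => extBlock s u xm xp z j := by
  by_cases h1 : s ≤ j ∧ j ≤ u
  · simpa only [extBlock, dif_pos h1] using measurable_pi_apply _
  · simp only [extBlock, dif_neg h1]
    exact measurable_const

lemma extBlock_lt (s u : ℕ) (xm xp : X) (z : Fin (u - s + 1) → X) {j : ℕ} (hj : j < s) :
    extBlock s u xm xp z j = xm := by
  have h1 : ¬ (s ≤ j ∧ j ≤ u) := by omega
  simp [extBlock, h1, hj]

lemma extBlock_gt (s u : ℕ) (xm xp : X) (z : Fin (u - s + 1) → X) {j : ℕ}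
    (hj : u < j) (hj2 : s ≤ j) : extBlock s u xm xp z j = xp := by
  have h1 : ¬ (s ≤ j ∧ j ≤ u) := by omega
  have h2 : ¬ (j < s) := by omega
  simp [extBlock, h1, h2]

lemma extBlock_mid (s u : ℕ) (xm xp : X) (z : Fin (u - s + 1) → X) {j : ℕ}
    (h1 : s ≤ j) (h2 : j ≤ u) : extBlock s u xm xp z j = z ⟨j - s, by omega⟩ := by
  simp only [extBlock]
  rw [dif_pos ⟨h1, h2⟩]

lemma extBlock_eq_ext1 (t u : ℕ) (x b : X) (hu : t + 1 ≤ u)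
    (z : Fin (u - (t+1) + 1) → X) (i : ℕ) :
    extBlock (t+1) u x b z (t + i) = ext1 x b z i := by
  rcases Nat.eq_zero_or_pos i with rfl | hi
  · rw [extBlock_lt _ _ _ _ _ (by omega), ext1_zero]
  · by_cases h2 : i ≤ u - (t+1) + 1
    · rw [extBlock_mid _ _ _ _ _ (by omega) (by omega), ext1_mid x b z hi h2]
      congr 1
      apply Fin.ext
      simp
      omega
    · rw [extBlock_gt _ _ _ _ _ (by omega) (by omega), ext1_big x b z (by omega)]

variable (ν0 : Measure X)

lemma A_meas [SFinite ν0] {mker : X → X → ℝ} {gg : ℕ → X → ℝ}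
    (hm : Measurable (Function.uncurry mker)) (hgm : ∀ j, Measurable (gg j)) :
    ∀ n j, Measurable fun p : X × X => Afun ν0 mker gg n j p.1 p.2 := by
  intro n
  induction n with
  | zero => intro j; simp only [Afun]; exact hm
  | succ n IH =>
    intro j
    have hf : Measurable fun q : (X × X) × X =>
        mker q.1.1 q.2 * (gg (j+1) q.2 * Afun ν0 mker gg n (j+1) q.2 q.1.2) :=
      (hm.comp (measurable_fst.fst.prodMk measurable_snd)).mul
        (((hgm (j+1)).comp measurable_snd).mul
          ((IH (j+1)).comp (measurable_snd.prodMk measurable_fst.snd)))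
    have := (hf.stronglyMeasurable.integral_prod_right' (ν := ν0)).measurable
    simpa [Afun] using this

lemma A_nonneg {mker : X → X → ℝ} {gg : ℕ → X → ℝ} (hm0 : ∀ x y, 0 ≤ mker x y)
    (hg0 : ∀ j x, 0 ≤ gg j x) : ∀ n j x e, 0 ≤ Afun ν0 mker gg n j x e := by
  intro n
  induction n with
  | zero => intro j x e; simpa [Afun] using hm0 x e
  | succ n IH =>
    intro j x e
    simp only [Afun]
    exact integral_nonneg fun z => mul_nonneg (hm0 _ _) (mul_nonneg (hg0 _ _) (IH _ _ _))

lemma A_le [IsProbabilityMeasure ν0] {mker : X → X → ℝ} {gg : ℕ → X → ℝ} {σp : ℝ} {T : ℕ → ℝ}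
    (hm : Measurable (Function.uncurry mker)) (hm0 : ∀ x y, 0 ≤ mker x y)
    (hmσ : ∀ x y, mker x y ≤ σp) (hm_int : ∀ x, ∫ y, mker x y ∂ν0 = 1)
    (hgm : ∀ j, Measurable (gg j)) (hg0 : ∀ j x, 0 ≤ gg j x)
    (hgT : ∀ j x, gg j x ≤ T j) (hT0 : ∀ j, 0 ≤ T j) :
    ∀ n j x e, Afun ν0 mker gg n j x e ≤ (∏ i ∈ range n, T (j+1+i)) * σp := by
  intro n
  induction n with
  | zero => intro j x e; simpa [Afun] using hmσ x e
  | succ n IH =>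
    intro j x e
    have hσp : 0 ≤ σp := le_trans (hm0 x e) (hmσ x e)
    set C := (∏ i ∈ range n, T (j+1+1+i)) * σp with hC
    have hC0 : 0 ≤ C := mul_nonneg (prod_nonneg fun i _ => hT0 _) hσp
    have hpt : ∀ z, mker x z * (gg (j+1) z * Afun ν0 mker gg n (j+1) z e)
        ≤ mker x z * (T (j+1) * C) := fun z =>
      mul_le_mul_of_nonneg_left
        (mul_le_mul (hgT _ _) (IH (j+1) z e) (A_nonneg ν0 hm0 hg0 n (j+1) z e) (hT0 _))
        (hm0 _ _)
    have hmeas1 : Measurable fun z =>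
        mker x z * (gg (j+1) z * Afun ν0 mker gg n (j+1) z e) :=
      (hm.of_uncurry_left).mul (((hgm (j+1))).mul
        ((A_meas ν0 hm hgm n (j+1)).comp (measurable_id.prodMk measurable_const)))
    have hint1 : Integrable
        (fun z => mker x z * (gg (j+1) z * Afun ν0 mker gg n (j+1) z e)) ν0 :=
      aux_integrable hmeas1
        (fun z => mul_nonneg (hm0 _ _) (mul_nonneg (hg0 _ _) (A_nonneg ν0 hm0 hg0 _ _ _ _)))
        (fun z => le_trans (hpt z)
          (mul_le_mul_of_nonneg_right (hmσ _ _) (mul_nonneg (hT0 _) hC0)))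
    have hint2 : Integrable (fun z => mker x z * (T (j+1) * C)) ν0 :=
      (aux_integrable hm.of_uncurry_left (fun z => hm0 _ _) (fun z => hmσ _ _)).mul_const _
    have hprod : ∏ i ∈ range (n+1), T (j+1+i) = T (j+1) * ∏ i ∈ range n, T (j+1+1+i) := by
      rw [prod_range_succ']
      rw [mul_comm]
      congr 1
      · exact prod_congr rfl fun i _ => by rw [show j+1+(i+1) = j+1+1+i by omega]
    calc Afun ν0 mker gg (n+1) j x e
        = ∫ z, mker x z * (gg (j+1) z * Afun ν0 mker gg n (j+1) z e) ∂ν0 := by simp [Afun]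
      _ ≤ ∫ z, mker x z * (T (j+1) * C) ∂ν0 := integral_mono hint1 hint2 hpt
      _ = (∫ z, mker x z ∂ν0) * (T (j+1) * C) := integral_mul_const _ _
      _ = T (j+1) * C := by rw [hm_int x, one_mul]
      _ = (∏ i ∈ range (n+1), T (j+1+i)) * σp := by rw [hprod, hC]; ring

lemma Aone_eq {mker : X → X → ℝ} :
    ∀ n (j j' : ℕ) (a b : X), Afun ν0 mker (fun _ _ => (1:ℝ)) n j a b
      = Afun ν0 mker (fun _ _ => (1:ℝ)) n j' a b := by
  intro n
  induction n with
  | zero => intro j j' a b; simp [Afun]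
  | succ n IH =>
    intro j j' a b
    simp only [Afun]
    exact integral_congr_ae (ae_of_all _ fun z => by dsimp only; rw [IH (j+1) (j'+1)])

lemma A_ge [IsProbabilityMeasure ν0] {mker : X → X → ℝ} {gg : ℕ → X → ℝ} {σp : ℝ} {T : ℕ → ℝ}
    {dinv : ℝ}
    (hm : Measurable (Function.uncurry mker)) (hm0 : ∀ x y, 0 ≤ mker x y)
    (hmσ : ∀ x y, mker x y ≤ σp) (hm_int : ∀ x, ∫ y, mker x y ∂ν0 = 1)
    (hgm : ∀ j, Measurable (gg j)) (hg0 : ∀ j x, 0 ≤ gg j x)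
    (hgT : ∀ j x, gg j x ≤ T j) (hT0 : ∀ j, 0 ≤ T j)
    (hd0 : 0 ≤ dinv) (hdT : ∀ j x, dinv * T j ≤ gg j x) :
    ∀ n j x e, (∏ i ∈ range n, (dinv * T (j+1+i))) * Afun ν0 mker (fun _ _ => (1:ℝ)) n 0 x e
      ≤ Afun ν0 mker gg n j x e := by
  have honem : ∀ j : ℕ, Measurable ((fun (_ : ℕ) (_ : X) => (1:ℝ)) j) :=
    fun _ => measurable_const
  have hone0 : ∀ (j : ℕ) (x : X), (0:ℝ) ≤ (fun (_ : ℕ) (_ : X) => (1:ℝ)) j x :=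
    fun _ _ => zero_le_one
  have honeT : ∀ (j : ℕ) (x : X), (fun (_ : ℕ) (_ : X) => (1:ℝ)) j x ≤ (fun _ : ℕ => (1:ℝ)) j :=
    fun _ _ => le_rfl
  have hone1 : ∀ j : ℕ, (0:ℝ) ≤ (fun _ : ℕ => (1:ℝ)) j := fun _ => zero_le_one
  have hQle : ∀ n j x e, Afun ν0 mker (fun _ _ => (1:ℝ)) n j x e ≤ σp := by
    intro n j x e
    have := A_le ν0 hm hm0 hmσ hm_int honem hone0 honeT hone1 n j x e
    simpa using this
  have hQ0 : ∀ n j x e, 0 ≤ Afun ν0 mker (fun _ _ => (1:ℝ)) n j x e :=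
    fun n j x e => A_nonneg ν0 hm0 hone0 n j x e
  intro n
  induction n with
  | zero =>
    intro j x e
    simp only [range_zero, prod_empty, one_mul]
    simp only [Afun]
    exact le_rfl
  | succ n IH =>
    intro j x e
    have hσp : 0 ≤ σp := le_trans (hm0 x e) (hmσ x e)
    set c0 := dinv * T (j+1) with hc0
    set P := ∏ i ∈ range n, (dinv * T (j+1+1+i)) with hP
    have hc00 : 0 ≤ c0 := mul_nonneg hd0 (hT0 _)
    have hP0 : 0 ≤ P := prod_nonneg fun i _ => mul_nonneg hd0 (hT0 _)
    have hprod : ∏ i ∈ range (n+1), (dinv * T (j+1+i)) = c0 * P := by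
      rw [prod_range_succ', mul_comm]
      congr 1
      exact prod_congr rfl fun i _ => by rw [show j+1+(i+1) = j+1+1+i by omega]
    have hQrec : Afun ν0 mker (fun _ _ => (1:ℝ)) (n+1) 0 x e
        = ∫ z, mker x z * Afun ν0 mker (fun _ _ => (1:ℝ)) n 0 z e ∂ν0 := by
      simp only [Afun, one_mul]
      exact integral_congr_ae (ae_of_all _ fun z => by
        dsimp only
        rw [Aone_eq ν0 n (0+1) 0])
    have hmeasQ : Measurable fun z => Afun ν0 mker (fun _ _ => (1:ℝ)) n 0 z e :=
      (A_meas ν0 hm honem n 0).comp (measurable_id.prodMk measurable_const)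
    have hmeasA : Measurable fun z => Afun ν0 mker gg n (j+1) z e :=
      (A_meas ν0 hm hgm n (j+1)).comp (measurable_id.prodMk measurable_const)
    have hpt : ∀ z, (c0 * P) * (mker x z * Afun ν0 mker (fun _ _ => (1:ℝ)) n 0 z e)
        ≤ mker x z * (gg (j+1) z * Afun ν0 mker gg n (j+1) z e) := by
      intro z
      have h1 : (c0 * P) * (mker x z * Afun ν0 mker (fun _ _ => (1:ℝ)) n 0 z e)
          = mker x z * (c0 * (P * Afun ν0 mker (fun _ _ => (1:ℝ)) n 0 z e)) := by ring
      rw [h1]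
      refine mul_le_mul_of_nonneg_left ?_ (hm0 _ _)
      exact mul_le_mul (hdT _ _) (IH (j+1) z e)
        (mul_nonneg hP0 (hQ0 n 0 z e)) (hg0 _ _)
    have hint1 : Integrable
        (fun z => (c0 * P) * (mker x z * Afun ν0 mker (fun _ _ => (1:ℝ)) n 0 z e)) ν0 := by
      refine Integrable.const_mul ?_ _
      exact aux_integrable (hm.of_uncurry_left.mul hmeasQ)
        (fun z => mul_nonneg (hm0 _ _) (hQ0 _ _ _ _))
        (C := σp * σp)
        (fun z => mul_le_mul (hmσ _ _) (hQle n 0 z e) (hQ0 _ _ _ _) hσp)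
    have hint2 : Integrable
        (fun z => mker x z * (gg (j+1) z * Afun ν0 mker gg n (j+1) z e)) ν0 := by
      refine aux_integrable (hm.of_uncurry_left.mul ((hgm (j+1)).mul hmeasA))
        (fun z => mul_nonneg (hm0 _ _) (mul_nonneg (hg0 _ _) (A_nonneg ν0 hm0 hg0 _ _ _ _)))
        (C := σp * (T (j+1) * ((∏ i ∈ range n, T (j+1+1+i)) * σp)))
        (fun z => ?_)
      refine mul_le_mul (hmσ _ _) ?_
        (mul_nonneg (hg0 _ _) (A_nonneg ν0 hm0 hg0 _ _ _ _)) hσp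
      refine mul_le_mul (hgT _ _) ?_ (A_nonneg ν0 hm0 hg0 _ _ _ _) (hT0 _)
      exact A_le ν0 hm hm0 hmσ hm_int hgm hg0 hgT hT0 n (j+1) z e
    calc (∏ i ∈ range (n+1), (dinv * T (j+1+i)))
          * Afun ν0 mker (fun _ _ => (1:ℝ)) (n+1) 0 x e
        = (c0 * P) * ∫ z, mker x z * Afun ν0 mker (fun _ _ => (1:ℝ)) n 0 z e ∂ν0 := by
          rw [hprod, hQrec]
      _ = ∫ z, (c0 * P) * (mker x z * Afun ν0 mker (fun _ _ => (1:ℝ)) n 0 z e) ∂ν0 :=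
          (integral_const_mul _ _).symm
      _ ≤ ∫ z, mker x z * (gg (j+1) z * Afun ν0 mker gg n (j+1) z e) ∂ν0 :=
          integral_mono hint1 hint2 hpt
      _ = Afun ν0 mker gg (n+1) j x e := by simp [Afun]

lemma integral_pi_succ [IsProbabilityMeasure ν0] {n : ℕ} (F : (Fin (n+1) → X) → ℝ)
    (hF : Measurable F) {C : ℝ} (h0 : ∀ z, 0 ≤ F z) (hC : ∀ z, F z ≤ C) :
    ∫ z, F z ∂(Measure.pi fun _ : Fin (n+1) => ν0)
      = ∫ x0, ∫ z, F (Fin.cons x0 z) ∂(Measure.pi fun _ : Fin n => ν0) ∂ν0 := by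
  have hmp := measurePreserving_piFinSuccAbove (fun _ : Fin (n+1) => ν0) 0
  set e := MeasurableEquiv.piFinSuccAbove (fun _ : Fin (n+1) => X) 0 with he
  have h1 : ∫ z, F z ∂(Measure.pi fun _ : Fin (n+1) => ν0)
      = ∫ p : X × (Fin n → X), F (e.symm p)
          ∂(ν0.prod (Measure.pi fun _ : Fin n => ν0)) := by
    rw [← hmp.integral_comp e.measurableEmbedding (fun p => F (e.symm p))]
    exact integral_congr_ae (ae_of_all _ fun z => by
      dsimp only
      rw [MeasurableEquiv.symm_apply_apply])
  have hsymm : ∀ p : X × (Fin n → X), e.symm p = Fin.cons p.1 p.2 := by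
    rintro ⟨x0, zz⟩
    rw [he, MeasurableEquiv.piFinSuccAbove_symm_apply]
    have hrfl : (Fin.insertNthEquiv (fun _ : Fin (n+1) => X) 0) (x0, zz)
        = Fin.insertNth 0 x0 zz := rfl
    rw [hrfl]
    exact Fin.insertNth_zero' x0 zz
  have hint : Integrable (fun p : X × (Fin n → X) => F (e.symm p))
      (ν0.prod (Measure.pi fun _ : Fin n => ν0)) :=
    aux_integrable (hF.comp e.symm.measurable) (fun p => h0 _) (fun p => hC _)
  rw [h1, integral_prod _ hint]
  refine integral_congr_ae (ae_of_all _ fun x0 =>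
    integral_congr_ae (ae_of_all _ fun z => ?_))
  dsimp only
  rw [hsymm (x0, z)]

lemma PI [IsProbabilityMeasure ν0] {mker : X → X → ℝ} {σp : ℝ}
    (hm : Measurable (Function.uncurry mker)) (hm0 : ∀ x y, 0 ≤ mker x y)
    (hmσ : ∀ x y, mker x y ≤ σp)
    (gg : ℕ → X → ℝ) (T : ℕ → ℝ) (hgm : ∀ j, Measurable (gg j))
    (hg0 : ∀ j x, 0 ≤ gg j x) (hgT : ∀ j x, gg j x ≤ T j) :
    ∀ (n j₀ : ℕ) (a b : X),
      (∫ z : Fin n → X, (∏ i ∈ range (n+1), mker (ext1 a b z i) (ext1 a b z (i+1))) *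
        ∏ i ∈ range n, gg (j₀+1+i) (ext1 a b z (i+1)) ∂(Measure.pi fun _ => ν0))
      = Afun ν0 mker gg n j₀ a b := by
  intro n
  induction n with
  | zero =>
    intro j₀ a b
    have hval : ∀ z : Fin 0 → X,
        (∏ i ∈ range (0+1), mker (ext1 a b z i) (ext1 a b z (i+1))) *
          ∏ i ∈ range 0, gg (j₀+1+i) (ext1 a b z (i+1)) = mker a b := by
      intro z
      rw [prod_range_one, prod_range_zero, mul_one, ext1_zero, ext1_big a b z (by omega)]
    rw [integral_congr_ae (ae_of_all _ hval), integral_const]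
    simp [Afun]
  | succ n IH =>
    intro j₀ a b
    have hσp : 0 ≤ σp := le_trans (hm0 a b) (hmσ a b)
    set F : (Fin (n+1) → X) → ℝ := fun z =>
      (∏ i ∈ range (n+1+1), mker (ext1 a b z i) (ext1 a b z (i+1))) *
        ∏ i ∈ range (n+1), gg (j₀+1+i) (ext1 a b z (i+1)) with hF
    have hFm : Measurable F := by
      refine Measurable.mul ?_ ?_
      · exact Finset.measurable_prod _ fun i _ =>
          hm.comp ((measurable_ext1 a b i).prodMk (measurable_ext1 a b (i+1)))
      · exact Finset.measurable_prod _ fun i _ =>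
          (hgm _).comp (measurable_ext1 a b (i+1))
    have hF0 : ∀ z, 0 ≤ F z := fun z =>
      mul_nonneg (prod_nonneg fun i _ => hm0 _ _) (prod_nonneg fun i _ => hg0 _ _)
    have hFC : ∀ z, F z ≤ σp^(n+1+1) * ∏ i ∈ range (n+1), T (j₀+1+i) := by
      intro z
      refine mul_le_mul ?_ ?_ (prod_nonneg fun i _ => hg0 _ _) (pow_nonneg hσp _)
      · calc (∏ i ∈ range (n+1+1), mker (ext1 a b z i) (ext1 a b z (i+1)))
            ≤ ∏ _i ∈ range (n+1+1), σp :=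
              prod_le_prod (fun i _ => hm0 _ _) (fun i _ => hmσ _ _)
          _ = σp^(n+1+1) := by rw [prod_const, card_range]
      · exact prod_le_prod (fun i _ => hg0 _ _) (fun i _ => hgT _ _)
    have hpeel := integral_pi_succ ν0 F hFm hF0 hFC
    have hinner : ∀ x0 : X, (∫ z, F (Fin.cons x0 z) ∂(Measure.pi fun _ : Fin n => ν0))
        = mker a x0 * (gg (j₀+1) x0 * Afun ν0 mker gg n (j₀+1) x0 b) := by
      intro x0
      have hcons : ∀ z : Fin n → X, F (Fin.cons x0 z)
          = mker a x0 * (gg (j₀+1) x0 *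
            ((∏ i ∈ range (n+1), mker (ext1 x0 b z i) (ext1 x0 b z (i+1))) *
              ∏ i ∈ range n, gg (j₀+1+1+i) (ext1 x0 b z (i+1)))) := by
        intro z
        rw [hF]
        dsimp only
        have hm1 : (∏ i ∈ range (n+1+1),
            mker (ext1 a b (Fin.cons x0 z) i) (ext1 a b (Fin.cons x0 z) (i+1)))
            = (∏ i ∈ range (n+1), mker (ext1 x0 b z i) (ext1 x0 b z (i+1))) * mker a x0 := by
          rw [prod_range_succ']
          congr 1
          · refine prod_congr rfl fun i _ => ?_
            rw [ext1_cons_succ, ext1_cons_succ]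
        have hg1 : (∏ i ∈ range (n+1), gg (j₀+1+i) (ext1 a b (Fin.cons x0 z) (i+1)))
            = (∏ i ∈ range n, gg (j₀+1+1+i) (ext1 x0 b z (i+1))) * gg (j₀+1) x0 := by
          rw [prod_range_succ']
          congr 1
          · refine prod_congr rfl fun i _ => ?_
            rw [show j₀+1+(i+1) = j₀+1+1+i by omega, ext1_cons_succ]
        rw [hm1, hg1]
        ring
      rw [integral_congr_ae (ae_of_all _ hcons), integral_const_mul, integral_const_mul, IH]
    calc (∫ z : Fin (n+1) → X, F z ∂(Measure.pi fun _ => ν0))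
        = ∫ x0, ∫ z, F (Fin.cons x0 z) ∂(Measure.pi fun _ : Fin n => ν0) ∂ν0 := hpeel
      _ = ∫ x0, mker a x0 * (gg (j₀+1) x0 * Afun ν0 mker gg n (j₀+1) x0 b) ∂ν0 :=
          integral_congr_ae (ae_of_all _ fun x0 => hinner x0)
      _ = Afun ν0 mker gg (n+1) j₀ a b := by simp [Afun]

lemma A_comp [IsProbabilityMeasure ν0] {mker : X → X → ℝ} {gg : ℕ → X → ℝ} {σp : ℝ} {T : ℕ → ℝ}
    (hm : Measurable (Function.uncurry mker)) (hm0 : ∀ x y, 0 ≤ mker x y)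
    (hmσ : ∀ x y, mker x y ≤ σp) (hm_int : ∀ x, ∫ y, mker x y ∂ν0 = 1)
    (hgm : ∀ j, Measurable (gg j)) (hg0 : ∀ j x, 0 ≤ gg j x)
    (hgT : ∀ j x, gg j x ≤ T j) (hT0 : ∀ j, 0 ≤ T j) :
    ∀ a c j (x E : X), Afun ν0 mker gg (a + c + 1) j x E
      = ∫ e, Afun ν0 mker gg a j x e * (gg (j+a+1) e * Afun ν0 mker gg c (j+a+1) e E) ∂ν0 := by
  intro a
  induction a with
  | zero =>
    intro c j x E
    rw [Nat.zero_add, show j + 0 + 1 = j + 1 from by omega]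
    simp only [Afun]
  | succ a IH =>
    intro c j x E
    have hidx : a + 1 + c + 1 = a + c + 1 + 1 := by omega
    have hσp : 0 ≤ σp := le_trans (hm0 x E) (hmσ x E)
    set Ba := (∏ i ∈ range a, T (j+1+1+i)) * σp with hBa
    set Bc := (∏ i ∈ range c, T (j+1+a+1+1+i)) * σp with hBc
    have hBa0 : 0 ≤ Ba := mul_nonneg (prod_nonneg fun i _ => hT0 _) hσp
    have hBc0 : 0 ≤ Bc := mul_nonneg (prod_nonneg fun i _ => hT0 _) hσp
    have hΦm : Measurable fun p : X × X => mker x p.1 * (gg (j+1) p.1 *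
        (Afun ν0 mker gg a (j+1) p.1 p.2 *
          (gg (j+1+a+1) p.2 * Afun ν0 mker gg c (j+1+a+1) p.2 E))) := by
      refine (hm.of_uncurry_left.comp measurable_fst).mul ?_
      refine ((hgm _).comp measurable_fst).mul ?_
      refine (A_meas ν0 hm hgm a (j+1)).mul ?_
      exact ((hgm _).comp measurable_snd).mul
        ((A_meas ν0 hm hgm c (j+1+a+1)).comp (measurable_snd.prodMk measurable_const))
    have hΦ0 : ∀ p : X × X, 0 ≤ mker x p.1 * (gg (j+1) p.1 *
        (Afun ν0 mker gg a (j+1) p.1 p.2 *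
          (gg (j+1+a+1) p.2 * Afun ν0 mker gg c (j+1+a+1) p.2 E))) := fun p =>
      mul_nonneg (hm0 _ _) (mul_nonneg (hg0 _ _) (mul_nonneg (A_nonneg ν0 hm0 hg0 _ _ _ _)
        (mul_nonneg (hg0 _ _) (A_nonneg ν0 hm0 hg0 _ _ _ _))))
    have hΦb : ∀ p : X × X, mker x p.1 * (gg (j+1) p.1 *
        (Afun ν0 mker gg a (j+1) p.1 p.2 *
          (gg (j+1+a+1) p.2 * Afun ν0 mker gg c (j+1+a+1) p.2 E)))
        ≤ σp * (T (j+1) * (Ba * (T (j+1+a+1) * Bc))) := by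
      intro p
      refine mul_le_mul (hmσ _ _) ?_ (mul_nonneg (hg0 _ _)
        (mul_nonneg (A_nonneg ν0 hm0 hg0 _ _ _ _)
          (mul_nonneg (hg0 _ _) (A_nonneg ν0 hm0 hg0 _ _ _ _)))) hσp
      refine mul_le_mul (hgT _ _) ?_ (mul_nonneg (A_nonneg ν0 hm0 hg0 _ _ _ _)
        (mul_nonneg (hg0 _ _) (A_nonneg ν0 hm0 hg0 _ _ _ _))) (hT0 _)
      refine mul_le_mul (A_le ν0 hm hm0 hmσ hm_int hgm hg0 hgT hT0 a (j+1) p.1 p.2) ?_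
        (mul_nonneg (hg0 _ _) (A_nonneg ν0 hm0 hg0 _ _ _ _)) hBa0
      exact mul_le_mul (hgT _ _) (A_le ν0 hm hm0 hmσ hm_int hgm hg0 hgT hT0 c (j+1+a+1) p.2 E)
        (A_nonneg ν0 hm0 hg0 _ _ _ _) (hT0 _)
    have hswap : Integrable (Function.uncurry fun z e => mker x z * (gg (j+1) z *
        (Afun ν0 mker gg a (j+1) z e *
          (gg (j+1+a+1) e * Afun ν0 mker gg c (j+1+a+1) e E)))) (ν0.prod ν0) :=
      aux_integrable hΦm hΦ0 hΦb
    calc Afun ν0 mker gg (a+1+c+1) j x E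
        = ∫ z, mker x z * (gg (j+1) z * Afun ν0 mker gg (a+c+1) (j+1) z E) ∂ν0 := by
          rw [hidx]; simp only [Afun]
      _ = ∫ z, mker x z * (gg (j+1) z *
            ∫ e, Afun ν0 mker gg a (j+1) z e *
              (gg (j+1+a+1) e * Afun ν0 mker gg c (j+1+a+1) e E) ∂ν0) ∂ν0 := by
          refine integral_congr_ae (ae_of_all _ fun z => ?_)
          dsimp only
          rw [IH c (j+1) z E]
      _ = ∫ z, ∫ e, mker x z * (gg (j+1) z *
            (Afun ν0 mker gg a (j+1) z e *
              (gg (j+1+a+1) e * Afun ν0 mker gg c (j+1+a+1) e E))) ∂ν0 ∂ν0 := by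
          refine integral_congr_ae (ae_of_all _ fun z => ?_)
          dsimp only
          rw [← integral_const_mul, ← integral_const_mul]
      _ = ∫ e, ∫ z, mker x z * (gg (j+1) z *
            (Afun ν0 mker gg a (j+1) z e *
              (gg (j+1+a+1) e * Afun ν0 mker gg c (j+1+a+1) e E))) ∂ν0 ∂ν0 :=
          integral_integral_swap hswap
      _ = ∫ e, (∫ z, mker x z * (gg (j+1) z * Afun ν0 mker gg a (j+1) z e) ∂ν0) *
            (gg (j+1+a+1) e * Afun ν0 mker gg c (j+1+a+1) e E) ∂ν0 := by
          refine integral_congr_ae (ae_of_all _ fun e => ?_)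
          dsimp only
          rw [← integral_mul_const]
          refine integral_congr_ae (ae_of_all _ fun z => ?_)
          dsimp only
          ring
      _ = ∫ e, Afun ν0 mker gg (a+1) j x e *
            (gg (j+(a+1)+1) e * Afun ν0 mker gg c (j+(a+1)+1) e E) ∂ν0 := by
          refine integral_congr_ae (ae_of_all _ fun e => ?_)
          dsimp only
          rw [show j+1+a+1 = j+(a+1)+1 from by omega]
          congr 1

lemma Nfun_eq [IsProbabilityMeasure ν0] {mker : X → X → ℝ} {gg : ℕ → X → ℝ} {σp : ℝ} {T : ℕ → ℝ}
    (hm : Measurable (Function.uncurry mker)) (hm0 : ∀ x y, 0 ≤ mker x y)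
    (hmσ : ∀ x y, mker x y ≤ σp)
    (hgm : ∀ j, Measurable (gg j)) (hg0 : ∀ j x, 0 ≤ gg j x)
    (hgT : ∀ j x, gg j x ≤ T j)
    (t u : ℕ) (htu : t ≤ u) (xstar x : X) :
    Nfun ν0 mker gg t u xstar x = gg t x * Afun ν0 mker gg (u - t) t x xstar := by
  by_cases hut : u = t
  · subst hut
    unfold Nfun
    have hval : ∀ z : Fin (u - (u+1) + 1) → X,
        (∏ j ∈ Finset.Icc (u+1) (u+1),
          mker (extBlock (u+1) u x xstar z (j-1)) (extBlock (u+1) u x xstar z j)) *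
          ∏ j ∈ Finset.Icc (u+1) u, gg j (extBlock (u+1) u x xstar z j) = mker x xstar := by
      intro z
      rw [Finset.Icc_self, Finset.prod_singleton, Finset.Icc_eq_empty (by omega), prod_empty,
        mul_one, show u+1-1 = u from by omega]
      rw [extBlock_lt _ _ _ _ _ (by omega), extBlock_gt _ _ _ _ _ (by omega) (by omega)]
    rw [integral_congr_ae (ae_of_all _ hval), integral_const]
    simp [Afun]
  · have hu1 : t + 1 ≤ u := by omega
    unfold Nfun
    have hPI := PI ν0 hm hm0 hmσ gg T hgm hg0 hgT (u - (t+1) + 1) t x xstar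
    have hval : ∀ z : Fin (u - (t+1) + 1) → X,
        (∏ j ∈ Finset.Icc (t+1) (u+1),
          mker (extBlock (t+1) u x xstar z (j-1)) (extBlock (t+1) u x xstar z j)) *
          ∏ j ∈ Finset.Icc (t+1) u, gg j (extBlock (t+1) u x xstar z j)
        = (∏ i ∈ range (u - (t+1) + 1 + 1), mker (ext1 x xstar z i) (ext1 x xstar z (i+1))) *
          ∏ i ∈ range (u - (t+1) + 1), gg (t+1+i) (ext1 x xstar z (i+1)) := by
      intro z
      congr 1
      · rw [← Finset.Ico_add_one_right_eq_Icc, prod_Ico_eq_prod_range,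
          show u + 1 + 1 - (t+1) = u - (t+1) + 1 + 1 from by omega]
        refine prod_congr rfl fun i _ => ?_
        rw [show t+1+i-1 = t+i from by omega, show t+1+i = t+(i+1) from by omega,
          extBlock_eq_ext1 t u x xstar hu1 z i, extBlock_eq_ext1 t u x xstar hu1 z (i+1)]
      · rw [← Finset.Ico_add_one_right_eq_Icc, prod_Ico_eq_prod_range,
          show u + 1 - (t+1) = u - (t+1) + 1 from by omega]
        refine prod_congr rfl fun i _ => ?_
        rw [show t+1+i = t+(i+1) from by omega, extBlock_eq_ext1 t u x xstar hu1 z (i+1),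
          show t+(i+1) = t+1+i from by omega]
    rw [integral_congr_ae (ae_of_all _ hval), hPI,
      show u - (t+1) + 1 = u - t from by omega]


end AuxStmt17

theorem stmt17 {X : Type*} [MeasurableSpace X] [StandardBorelSpace X]
    (ν0 : Measure X) [IsProbabilityMeasure ν0]
    (mker : X → X → ℝ) (g : ℕ → X → ℝ)
    (h : ℕ) (hh : 1 ≤ h) (σm σp δ : ℝ)
    (hσm : 0 < σm) (hσp : 0 < σp) (hδ : 1 ≤ δ)
    -- (S1)
    (hm_meas : Measurable (Function.uncurry mker))
    (hm_nonneg : ∀ x x', 0 ≤ mker x x')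
    (hm_le : ∀ x x', mker x x' ≤ σp)
    (hm_int : ∀ x, ∫ x', mker x x' ∂ν0 = 1)
    (hS1 : S1minor ν0 mker h σm)
    -- (S2)
    (hg_meas : ∀ t, Measurable (g t))
    (hg_pos : ∀ t x, 0 < g t x)
    (hg_bdd : ∀ t, ∃ C, ∀ x, g t x ≤ C)
    (hg_ratio : ∀ t (x y : X), g t x ≤ δ ^ ((h : ℝ))⁻¹ * g t y)
    -- the block
    (t u : ℕ) (htu : t ≤ u) (hblock : h ≤ u - t + 1) (xstar : X) :
    ∀ μ : Measure X, IsProbabilityMeasure μ →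
      (⨆ x : X, Nfun ν0 mker g t u xstar x) ≤
        δ * (σp / σm) * ∫ x, Nfun ν0 mker g t u xstar x ∂μ := by
  intro μ hμ
  haveI := hμ
  have hXne : Nonempty X := by
    by_contra hX
    rw [not_nonempty_iff] at hX
    have h1 : ν0 Set.univ = 1 := measure_univ
    rw [Set.univ_eq_empty_iff.mpr hX, measure_empty] at h1
    exact zero_ne_one h1
  have hδ0 : (0:ℝ) < δ := lt_of_lt_of_le one_pos hδ
  set r : ℝ := δ ^ ((h : ℝ))⁻¹ with hr
  have hr0 : 0 < r := Real.rpow_pos_of_pos hδ0 _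
  set dinv : ℝ := r⁻¹ with hdinv
  have hdinv0 : 0 ≤ dinv := inv_nonneg.2 hr0.le
  set S : ℕ → ℝ := fun j => ⨆ y, g j y with hS
  have hbdd : ∀ j, BddAbove (Set.range (g j)) := by
    intro j
    obtain ⟨C, hC⟩ := hg_bdd j
    exact ⟨C, fun v hv => by obtain ⟨y, hy⟩ := hv; exact hy ▸ hC y⟩
  have hgS : ∀ j y, g j y ≤ S j := fun j y => le_ciSup (hbdd j) y
  have hg0 : ∀ j y, 0 ≤ g j y := fun j y => (hg_pos j y).le
  have hS0 : ∀ j, 0 ≤ S j :=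
    fun j => le_trans (hg0 j (Classical.choice hXne)) (hgS j _)
  have hSr : ∀ j y, S j ≤ r * g j y := fun j y => ciSup_le fun z => hg_ratio j z y
  have hdS : ∀ j y, dinv * S j ≤ g j y := by
    intro j y
    calc dinv * S j ≤ dinv * (r * g j y) := mul_le_mul_of_nonneg_left (hSr j y) hdinv0
      _ = g j y := by rw [hdinv, ← mul_assoc, inv_mul_cancel₀ (ne_of_gt hr0), one_mul]
  have hrep : ∀ x, Nfun ν0 mker g t u xstar x = g t x * Afun ν0 mker g (u - t) t x xstar :=
    fun x => Nfun_eq ν0 hm_meas hm_nonneg hm_le hg_meas hg0 hgS t u htu xstar x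
  set Pr : ℝ := ∏ i ∈ range (h-1), S (t+1+i) with hPr
  have hPr0 : 0 ≤ Pr := prod_nonneg fun i _ => hS0 _
  -- minorisation
  have hQσm : ∀ a b : X, σm ≤ Afun ν0 mker (fun _ _ => (1:ℝ)) (h-1) 0 a b := by
    intro a b
    have hPI1 := PI ν0 hm_meas hm_nonneg hm_le (fun _ _ => (1:ℝ)) (fun _ => (1:ℝ))
      (fun _ => measurable_const) (fun _ _ => zero_le_one) (fun _ _ => le_rfl) (h-1) 0 a b
    rw [show h - 1 + 1 = h from by omega] at hPI1
    simp only [prod_const_one, mul_one] at hPI1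
    calc σm ≤ ∫ z : Fin (h-1) → X,
          ∏ j ∈ Finset.range h, mker (ext1 a b z j) (ext1 a b z (j + 1))
          ∂(Measure.pi fun _ => ν0) := hS1 a b
      _ = Afun ν0 mker (fun _ _ => (1:ℝ)) (h-1) 0 a b := hPI1
  -- bounds on the h-1 step head
  have hup : ∀ x e : X, Afun ν0 mker g (h-1) t x e ≤ Pr * σp := fun x e =>
    A_le ν0 hm_meas hm_nonneg hm_le hm_int hg_meas hg0 hgS hS0 (h-1) t x e
  have hlo : ∀ y e : X, (dinv^(h-1) * Pr) * σm ≤ Afun ν0 mker g (h-1) t y e := by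
    intro y e
    have h1 := A_ge ν0 hm_meas hm_nonneg hm_le hm_int hg_meas hg0 hgS hS0 hdinv0 hdS
      (h-1) t y e
    have h2 : (∏ i ∈ range (h-1), (dinv * S (t+1+i))) = dinv^(h-1) * Pr := by
      rw [prod_mul_distrib, prod_const, card_range, hPr]
    calc (dinv^(h-1) * Pr) * σm
        ≤ (dinv^(h-1) * Pr) * Afun ν0 mker (fun _ _ => (1:ℝ)) (h-1) 0 y e :=
          mul_le_mul_of_nonneg_left (hQσm y e) (mul_nonneg (pow_nonneg hdinv0 _) hPr0)
      _ ≤ Afun ν0 mker g (h-1) t y e := by rw [← h2]; exact h1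
  obtain ⟨J, hJ0, hAub, hAlb⟩ : ∃ J : ℝ, 0 ≤ J ∧
      (∀ x, Afun ν0 mker g (u-t) t x xstar ≤ (Pr * σp) * J) ∧
      (∀ y, ((dinv^(h-1) * Pr) * σm) * J ≤ Afun ν0 mker g (u-t) t y xstar) := by
    by_cases hcase : u - t = h - 1
    · refine ⟨1, zero_le_one, fun x => ?_, fun y => ?_⟩
      · rw [hcase, mul_one]; exact hup x xstar
      · rw [hcase, mul_one]; exact hlo y xstar
    · have hnh' : h - 1 + ((u-t) - h) + 1 = u - t := by omega
      set ψ : X → ℝ := fun e =>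
        g (t+(h-1)+1) e * Afun ν0 mker g ((u-t)-h) (t+(h-1)+1) e xstar with hψ
      have hψ0 : ∀ e, 0 ≤ ψ e := fun e =>
        mul_nonneg (hg0 _ _) (A_nonneg ν0 hm_nonneg hg0 _ _ _ _)
      have hψm : Measurable ψ := (hg_meas _).mul
        ((A_meas ν0 hm_meas hg_meas ((u-t)-h) _).comp (measurable_id.prodMk measurable_const))
      have hψb : ∀ e, ψ e ≤ S (t+(h-1)+1) *
          ((∏ i ∈ range ((u-t)-h), S (t+(h-1)+1+1+i)) * σp) := fun e =>
        mul_le_mul (hgS _ _)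
          (A_le ν0 hm_meas hm_nonneg hm_le hm_int hg_meas hg0 hgS hS0 _ _ _ _)
          (A_nonneg ν0 hm_nonneg hg0 _ _ _ _) (hS0 _)
      set Cψ : ℝ := S (t+(h-1)+1) * ((∏ i ∈ range ((u-t)-h), S (t+(h-1)+1+1+i)) * σp) with hCψ
      have hcompA : ∀ x, Afun ν0 mker g (u-t) t x xstar
          = ∫ e, Afun ν0 mker g (h-1) t x e * ψ e ∂ν0 := by
        intro x
        have hac := A_comp ν0 hm_meas hm_nonneg hm_le hm_int hg_meas hg0 hgS hS0
          (h-1) ((u-t)-h) t x xstar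
        rw [hnh'] at hac
        exact hac
      have hintψ : Integrable ψ ν0 := aux_integrable hψm hψ0 hψb
      have hmeashead : ∀ x : X, Measurable fun e => Afun ν0 mker g (h-1) t x e * ψ e := fun x =>
        ((A_meas ν0 hm_meas hg_meas (h-1) t).comp
          (measurable_const.prodMk measurable_id)).mul hψm
      have hint1 : ∀ x : X, Integrable (fun e => Afun ν0 mker g (h-1) t x e * ψ e) ν0 := by
        intro x
        refine aux_integrable (hmeashead x)
          (fun e => mul_nonneg (A_nonneg ν0 hm_nonneg hg0 _ _ _ _) (hψ0 e))
          (C := (Pr * σp) * Cψ) (fun e => ?_)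
        exact mul_le_mul (hup x e) (hψb e) (hψ0 e) (mul_nonneg hPr0 hσp.le)
      refine ⟨∫ e, ψ e ∂ν0, integral_nonneg hψ0, fun x => ?_, fun y => ?_⟩
      · rw [hcompA x]
        calc (∫ e, Afun ν0 mker g (h-1) t x e * ψ e ∂ν0)
            ≤ ∫ e, (Pr * σp) * ψ e ∂ν0 :=
              integral_mono (hint1 x) (hintψ.const_mul _)
                (fun e => mul_le_mul_of_nonneg_right (hup x e) (hψ0 e))
          _ = (Pr * σp) * ∫ e, ψ e ∂ν0 := integral_const_mul _ _
      · rw [hcompA y]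
        calc ((dinv^(h-1) * Pr) * σm) * ∫ e, ψ e ∂ν0
            = ∫ e, ((dinv^(h-1) * Pr) * σm) * ψ e ∂ν0 := (integral_const_mul _ _).symm
          _ ≤ ∫ e, Afun ν0 mker g (h-1) t y e * ψ e ∂ν0 :=
              integral_mono (hintψ.const_mul _) (hint1 y)
                (fun e => mul_le_mul_of_nonneg_right (hlo y e) (hψ0 e))
  -- arithmetic: δ * dinv^(h-1) = r
  have hrh : r ^ h = δ := by
    rw [hr, ← Real.rpow_natCast (δ ^ ((h : ℝ))⁻¹) h, ← Real.rpow_mul hδ0.le,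
      inv_mul_cancel₀ (Nat.cast_ne_zero.mpr (by omega)), Real.rpow_one]
  have hδr : δ * dinv^(h-1) = r := by
    calc δ * dinv^(h-1) = r^h * (r^(h-1))⁻¹ := by rw [hdinv, inv_pow, ← hrh]
      _ = r^(h-(h-1)) := (pow_sub₀ r (ne_of_gt hr0) (by omega)).symm
      _ = r := by rw [show h-(h-1) = 1 from by omega, pow_one]
  have hc0 : 0 ≤ δ * (σp / σm) := by positivity
  have key : ∀ x y, Nfun ν0 mker g t u xstar x
      ≤ δ * (σp/σm) * Nfun ν0 mker g t u xstar y := by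
    intro x y
    have h1 : Nfun ν0 mker g t u xstar x ≤ (r * g t y) * ((Pr*σp)*J) := by
      rw [hrep x]
      calc g t x * Afun ν0 mker g (u-t) t x xstar ≤ g t x * ((Pr*σp)*J) :=
            mul_le_mul_of_nonneg_left (hAub x) (hg0 t x)
        _ ≤ (r * g t y) * ((Pr*σp)*J) :=
            mul_le_mul_of_nonneg_right (hg_ratio t x y)
              (mul_nonneg (mul_nonneg hPr0 hσp.le) hJ0)
    have h2 : δ * (σp/σm) * (g t y * ((((dinv^(h-1))*Pr)*σm)*J))
        ≤ δ * (σp/σm) * Nfun ν0 mker g t u xstar y := by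
      rw [hrep y]
      exact mul_le_mul_of_nonneg_left
        (mul_le_mul_of_nonneg_left (hAlb y) (hg0 t y)) hc0
    refine le_trans h1 (le_trans (le_of_eq ?_) h2)
    rw [← hδr]
    field_simp
  have hNmeas : Measurable (Nfun ν0 mker g t u xstar) := by
    have heq : (Nfun ν0 mker g t u xstar)
        = fun x => g t x * Afun ν0 mker g (u-t) t x xstar := funext hrep
    rw [heq]
    exact (hg_meas t).mul ((A_meas ν0 hm_meas hg_meas (u-t) t).comp
      (measurable_id.prodMk measurable_const))
  have hN0 : ∀ x, 0 ≤ Nfun ν0 mker g t u xstar x := fun x => by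
    rw [hrep x]; exact mul_nonneg (hg0 _ _) (A_nonneg ν0 hm_nonneg hg0 _ _ _ _)
  have hNb : ∀ x, Nfun ν0 mker g t u xstar x
      ≤ S t * ((∏ i ∈ range (u-t), S (t+1+i)) * σp) := fun x => by
    rw [hrep x]
    exact mul_le_mul (hgS _ _)
      (A_le ν0 hm_meas hm_nonneg hm_le hm_int hg_meas hg0 hgS hS0 _ _ _ _)
      (A_nonneg ν0 hm_nonneg hg0 _ _ _ _) (hS0 _)
  have hNint : Integrable (Nfun ν0 mker g t u xstar) μ := aux_integrable hNmeas hN0 hNb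
  refine ciSup_le fun x => ?_
  calc Nfun ν0 mker g t u xstar x
      = ∫ _y, Nfun ν0 mker g t u xstar x ∂μ := by
        rw [integral_const, probReal_univ, one_smul]
    _ ≤ ∫ y, δ * (σp/σm) * Nfun ν0 mker g t u xstar y ∂μ :=
        integral_mono (integrable_const _) (hNint.const_mul _) (fun y => key x y)
    _ = δ * (σp/σm) * ∫ y, Nfun ν0 mker g t u xstar y ∂μ := integral_const_mul _ _
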